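/- Let z be the element of the plactic monoid M represented by the word cba, and let π : M →* M' be the natural quotient homomorphism onto M' := M/(cba = 1). Then π restricts to a bijection from the set M \ Mz = {v ∈ M | v is not of the form m * z for any m ∈ M} onto M': for every element m' ∈ M' there exists a unique v ∈ M with v ∉ {m * z | m ∈ M} and π v = m'. -/

import Mathlib

namespace Plactic

/-- The generator `a`. -/
def a : FreeMonoid (Fin 3) := FreeMonoid.of 0
/-- The generator `b`. -/
def b : FreeMonoid (Fin 3) := FreeMonoid.of 1
/-- The generator `c`. -/
def c : FreeMonoid (Fin 3) := FreeMonoid.of 2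

/-- The eight Knuth relations on three generators. -/
inductive KnuthRel : FreeMonoid (Fin 3) → FreeMonoid (Fin 3) → Prop
  | aba : KnuthRel (a * b * a) (b * a * a)
  | bab : KnuthRel (b * a * b) (b * b * a)
  | aca : KnuthRel (a * c * a) (c * a * a)
  | cac : KnuthRel (c * a * c) (c * c * a)
  | cbb : KnuthRel (c * b * b) (b * c * b)
  | cbc : KnuthRel (c * b * c) (c * c * b)
  | bac : KnuthRel (b * a * c) (b * c * a)
  | acb : KnuthRel (a * c * b) (c * a * b)

/-- The plactic congruence: the congruence generated by the Knuth relations. -/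
def placticCon : Con (FreeMonoid (Fin 3)) := conGen KnuthRel

/-- The plactic monoid with three generators. -/
abbrev M := placticCon.Quotient

/-- The natural projection from the free monoid onto the plactic monoid. -/
def mk : FreeMonoid (Fin 3) →* M := placticCon.mk'

/-- The congruence on `M` generated by the pair `(ac, ca)`. -/
def con1 : Con M := conGen (fun x y => x = mk (a * c) ∧ y = mk (c * a))

/-- `N1 = M/(ac = ca)`. -/
abbrev N1 := con1.Quotient

/-- The congruence on `M` generated by the pair `(bacb, cbab)`. -/
def con2 : Con M := conGen (fun x y => x = mk (b * a * c * b) ∧ y = mk (c * b * a * b))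

/-- The grammic monoid `N2 = M/(bacb = cbab)`. -/
abbrev N2 := con2.Quotient


/-- The congruence on `M` generated by the pair `(cba, 1)`. -/
def conM' : Con M := conGen (fun x y => x = mk (c * b * a) ∧ y = 1)

/-- `M' = M/(cba = 1)`. -/
abbrev M' := conM'.Quotient
/-- Tableau data: row1 = a^p b^q c^r, row2 = b^s c^t, row3 = c^u. -/
structure Tab where
  p : ℕ
  q : ℕ
  r : ℕ
  s : ℕ
  t : ℕ
  u : ℕ
deriving DecidableEq

/-- Schensted insertion of a single letter. -/
def step (T : Tab) (x : Fin 3) : Tab :=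
  match x.val, T with
  | 0, ⟨p, 0, 0, s, t, u⟩ => ⟨p+1, 0, 0, s, t, u⟩
  | 0, ⟨p, 0, r+1, s, t, u⟩ => ⟨p+1, 0, r, s, t+1, u⟩
  | 0, ⟨p, q+1, r, s, 0, u⟩ => ⟨p+1, q, r, s+1, 0, u⟩
  | 0, ⟨p, q+1, r, s, t+1, u⟩ => ⟨p+1, q, r, s+1, t, u+1⟩
  | 1, ⟨p, q, 0, s, t, u⟩ => ⟨p, q+1, 0, s, t, u⟩
  | 1, ⟨p, q, r+1, s, t, u⟩ => ⟨p, q+1, r, s, t+1, u⟩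
  | _, ⟨p, q, r, s, t, u⟩ => ⟨p, q, r+1, s, t, u⟩

@[simp] lemma step_a00 (p s t u : ℕ) : step ⟨p,0,0,s,t,u⟩ 0 = ⟨p+1,0,0,s,t,u⟩ := rfl
@[simp] lemma step_a0r (p r s t u : ℕ) : step ⟨p,0,r+1,s,t,u⟩ 0 = ⟨p+1,0,r,s,t+1,u⟩ := rfl
@[simp] lemma step_aq0 (p q r s u : ℕ) : step ⟨p,q+1,r,s,0,u⟩ 0 = ⟨p+1,q,r,s+1,0,u⟩ := rfl
@[simp] lemma step_aqt (p q r s t u : ℕ) : step ⟨p,q+1,r,s,t+1,u⟩ 0 = ⟨p+1,q,r,s+1,t,u+1⟩ := rfl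
@[simp] lemma step_b0 (p q s t u : ℕ) : step ⟨p,q,0,s,t,u⟩ 1 = ⟨p,q+1,0,s,t,u⟩ := rfl
@[simp] lemma step_br (p q r s t u : ℕ) : step ⟨p,q,r+1,s,t,u⟩ 1 = ⟨p,q+1,r,s,t+1,u⟩ := rfl
@[simp] lemma step_c (p q r s t u : ℕ) : step ⟨p,q,r,s,t,u⟩ 2 = ⟨p,q,r+1,s,t,u⟩ := rfl

/-- Insertion of a word. -/
def stepWord (T : Tab) (w : FreeMonoid (Fin 3)) : Tab :=
  (FreeMonoid.toList w).foldl step T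

lemma stepWord_mul (T : Tab) (v w : FreeMonoid (Fin 3)) :
    stepWord T (v * w) = stepWord (stepWord T v) w := by
  simp [stepWord, FreeMonoid.toList_mul, List.foldl_append]

@[simp] lemma stepWord_of (T : Tab) (x : Fin 3) : stepWord T (FreeMonoid.of x) = step T x := rfl

@[simp] lemma stepWord_one (T : Tab) : stepWord T 1 = T := rfl

lemma stepWord_knuth {v w : FreeMonoid (Fin 3)} (h : KnuthRel v w) (T : Tab) :
    stepWord T v = stepWord T w := by
  obtain ⟨p, q, r, s, t, u⟩ := T
  cases h <;> simp only [a, b, c, stepWord_mul, stepWord_of] <;>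
    rcases q with _|_|q <;> rcases r with _|_|r <;> rcases t with _|_|t <;> rfl
lemma stepWord_con {v w : FreeMonoid (Fin 3)} (h : placticCon v w) (T : Tab) :
    stepWord T v = stepWord T w := by
  induction h generalizing T with
  | of x y h => exact stepWord_knuth h T
  | refl => rfl
  | symm _ ih => exact (ih T).symm
  | trans _ _ ih1 ih2 => exact (ih1 T).trans (ih2 T)
  | mul _ _ ih1 ih2 => simp only [stepWord_mul]; rw [ih1]; exact ih2 _

/-- Generators of `M`. -/
def Am : M := mk a
def Bm : M := mk b
def Cm : M := mk c

/-- The central element `z = cba`. -/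
def zm : M := mk (c * b * a)

lemma zm_eq : zm = Cm * Bm * Am := by simp [zm, Am, Bm, Cm, map_mul]

lemma krel {x y : FreeMonoid (Fin 3)} (h : KnuthRel x y) : mk x = mk y :=
  Quot.sound (ConGen.Rel.of _ _ h)
lemma r_aba : Am*Bm*Am = Bm*Am*Am := by simpa [Am, Bm, Cm, map_mul] using krel KnuthRel.aba
lemma r_bab : Bm*Am*Bm = Bm*Bm*Am := by simpa [Am, Bm, Cm, map_mul] using krel KnuthRel.bab
lemma r_aca : Am*Cm*Am = Cm*Am*Am := by simpa [Am, Bm, Cm, map_mul] using krel KnuthRel.aca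
lemma r_cac : Cm*Am*Cm = Cm*Cm*Am := by simpa [Am, Bm, Cm, map_mul] using krel KnuthRel.cac
lemma r_cbb : Cm*Bm*Bm = Bm*Cm*Bm := by simpa [Am, Bm, Cm, map_mul] using krel KnuthRel.cbb
lemma r_cbc : Cm*Bm*Cm = Cm*Cm*Bm := by simpa [Am, Bm, Cm, map_mul] using krel KnuthRel.cbc
lemma r_bac : Bm*Am*Cm = Bm*Cm*Am := by simpa [Am, Bm, Cm, map_mul] using krel KnuthRel.bac
lemma r_acb : Am*Cm*Bm = Cm*Am*Bm := by simpa [Am, Bm, Cm, map_mul] using krel KnuthRel.acb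

lemma cCB_B : Commute (Cm*Bm) Bm := by
  show Cm*Bm*Bm = Bm*(Cm*Bm); rw [r_cbb, mul_assoc]
lemma cCB_C : Commute (Cm*Bm) Cm := by
  show Cm*Bm*Cm = Cm*(Cm*Bm); rw [r_cbc, mul_assoc]
lemma cCA_A : Commute (Cm*Am) Am := by
  show Cm*Am*Am = Am*(Cm*Am); rw [← r_aca, mul_assoc]
lemma cCA_C : Commute (Cm*Am) Cm := by
  show Cm*Am*Cm = Cm*(Cm*Am); rw [r_cac, mul_assoc]
lemma cBA_A : Commute (Bm*Am) Am := by
  show Bm*Am*Am = Am*(Bm*Am); rw [← r_aba, mul_assoc]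
lemma cBA_B : Commute (Bm*Am) Bm := by
  show Bm*Am*Bm = Bm*(Bm*Am); rw [r_bab, mul_assoc]

lemma mov {g y : M} (h : Commute g y) (n : ℕ) (x : M) :
    y^n * (g * x) = g * (y^n * x) := by
  rw [← mul_assoc, ((h.pow_right n).symm).eq, mul_assoc]

lemma pabs' (g : M) (n : ℕ) (x : M) : g * (g^n * x) = g^(n+1) * x := by
  rw [← mul_assoc, ← pow_succ']

lemma m1 (r : ℕ) (x : M) : Cm^(r+1)*(Bm*x) = Cm*(Bm*(Cm^r*x)) := by
  rw [pow_succ, mul_assoc, ← mul_assoc Cm Bm x, mov cCB_C, mul_assoc]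

lemma m2 (q : ℕ) (x : M) : Bm^q*(Cm*(Bm*x)) = Cm*(Bm^(q+1)*x) := by
  rw [← mul_assoc Cm Bm x, mov cCB_B, mul_assoc, pabs']

lemma m3 (p : ℕ) (x : M) : Am^p*(Cm*(Bm*x)) = Cm*(Am^p*(Bm*x)) := by
  rcases p with _|p
  · simp
  · rw [pow_succ, mul_assoc, ← mul_assoc Am Cm (Bm*x), ← mul_assoc (Am*Cm) Bm x,
      r_acb, mul_assoc (Cm*Am) Bm x, mov cCA_A, mul_assoc, pabs', pow_succ]

lemma m4 (r : ℕ) (x : M) : Cm^(r+1)*(Am*x) = Cm*(Am*(Cm^r*x)) := by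
  rw [pow_succ, mul_assoc, ← mul_assoc Cm Am x, mov cCA_C, mul_assoc]

lemma m5 (q : ℕ) (x : M) : Bm^(q+1)*(Cm*(Am*x)) = Bm*(Am*(Bm^q*(Cm*x))) := by
  rw [pow_succ, mul_assoc, ← mul_assoc Bm Cm (Am*x), ← mul_assoc (Bm*Cm) Am x,
    ← r_bac, mul_assoc (Bm*Am) Cm x, mov cBA_B, mul_assoc]

lemma m6 (p : ℕ) (x : M) : Am^p*(Bm*(Am*x)) = Bm*(Am^(p+1)*x) := by
  rw [← mul_assoc Bm Am x, mov cBA_A, mul_assoc, pabs']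

lemma m7 (q : ℕ) (x : M) : Bm^(q+1)*(Am*x) = Bm*(Am*(Bm^q*x)) := by
  rw [pow_succ, mul_assoc, ← mul_assoc Bm Am x, mov cBA_B, mul_assoc]

lemma m8 (p : ℕ) (x : M) : Am^p*(Cm*(Am*x)) = Cm*(Am^(p+1)*x) := by
  rw [← mul_assoc Cm Am x, mov cCA_A, mul_assoc, pabs']

lemma W1 (p q r : ℕ) (x : M) :
    Am^p*(Bm^q*(Cm^(r+1)*(Bm*x))) = Cm*(Am^p*(Bm^(q+1)*(Cm^r*x))) := by
  rw [m1, m2, ← pabs' Bm q (Cm^r*x), m3, pabs']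

lemma W2 (p q r : ℕ) (x : M) :
    Am^p*(Bm^(q+1)*(Cm^r*(Am*x))) = Bm*(Am^(p+1)*(Bm^q*(Cm^r*x))) := by
  rcases r with _|r
  · simp only [pow_zero, one_mul]
    rw [m7, m6]
  · rw [m4, m5, pabs', m6]

lemma W3 (p r : ℕ) (x : M) :
    Am^p*(Cm^(r+1)*(Am*x)) = Cm*(Am^(p+1)*(Cm^r*x)) := by
  rw [m4, m8]

lemma pabs2 (g : M) (n : ℕ) (x : M) : g^n * (g * x) = g^(n+1) * x := by
  rw [← mul_assoc, ← pow_succ]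
/-- Adding a full column to a tableau. -/
def colAdd (T : Tab) : Tab := ⟨T.p+1, T.q, T.r, T.s+1, T.t, T.u+1⟩

/-- The element of `M` represented by the reading word of a tableau. -/
def rho (T : Tab) : M := Cm^T.u * (Bm^T.s * (Cm^T.t * (Am^T.p * (Bm^T.q * Cm^T.r))))

def genM (x : Fin 3) : M := mk (FreeMonoid.of x)

lemma genM_0 : genM 0 = Am := rfl
lemma genM_1 : genM 1 = Bm := rfl
lemma genM_2 : genM 2 = Cm := rfl

lemma rho_step (T : Tab) (x : Fin 3) : rho (step T x) = rho T * genM x := by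
  obtain ⟨p, q, r, s, t, u⟩ := T
  have hx : x = 0 ∨ x = 1 ∨ x = 2 := by omega
  rcases hx with rfl | rfl | rfl
  · -- x = 0, insert a
    rcases q with _|q
    · rcases r with _|r
      · rw [step_a00, genM_0]
        simp only [rho, pow_zero, one_mul, mul_one, mul_assoc]
        rw [← pow_succ]
      · rw [step_a0r, genM_0]
        simp only [rho, pow_zero, one_mul, mul_assoc]
        have h := W3 p r (1:M)
        simp only [mul_one] at h
        rw [h, pabs2]
    · rcases t with _|t
      · rw [step_aq0, genM_0]
        simp only [rho, pow_zero, one_mul, mul_assoc]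
        have h := W2 p q r (1:M)
        simp only [mul_one] at h
        rw [h, pabs2]
      · rw [step_aqt, genM_0]
        simp only [rho, mul_assoc]
        have h := W2 p q r (1:M)
        simp only [mul_one] at h
        rw [h, m1, m2, pabs2]
  · -- x = 1, insert b
    rcases r with _|r
    · rw [step_b0, genM_1]
      simp only [rho, pow_zero, one_mul, mul_one, mul_assoc]
      rw [← pow_succ]
    · rw [step_br, genM_1]
      simp only [rho, mul_assoc]
      have h := W1 p q r (1:M)
      simp only [mul_one] at h
      rw [h, pabs2]
  · -- x = 2, insert c
    rw [step_c, genM_2]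
    simp only [rho, mul_assoc]
    rw [← pow_succ]
/-- The empty tableau. -/
def e0 : Tab := ⟨0,0,0,0,0,0⟩

lemma rho_e0 : rho e0 = 1 := by simp [rho, e0]

lemma rho_stepWord (w : FreeMonoid (Fin 3)) : ∀ T : Tab,
    rho (stepWord T w) = rho T * mk w := by
  induction w using FreeMonoid.inductionOn' with
  | one => intro T; simp
  | of_mul x w ih =>
    intro T
    rw [stepWord_mul, stepWord_of, ih, rho_step, map_mul, ← mul_assoc]
    rfl

/-- The insertion tableau of an element of the plactic monoid. -/
def Phi (m : M) : Tab := Con.liftOn m (stepWord e0) (fun _ _ h => stepWord_con h e0)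

lemma Phi_mk (w : FreeMonoid (Fin 3)) : Phi (mk w) = stepWord e0 w := rfl

lemma rho_Phi (m : M) : rho (Phi m) = m := by
  induction m using Con.induction_on with
  | H w =>
    show rho (stepWord e0 w) = _
    rw [rho_stepWord, rho_e0, one_mul]
    rfl

lemma Phi_mul_mk (m : M) (w : FreeMonoid (Fin 3)) :
    Phi (m * mk w) = stepWord (Phi m) w := by
  induction m using Con.induction_on with
  | H v =>
    have : (↑v : M) * mk w = mk (v * w) := by rw [map_mul]; rfl
    rw [this]
    show stepWord e0 (v * w) = stepWord (stepWord e0 v) w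
    exact stepWord_mul _ _ _

lemma Phi_injective {m₁ m₂ : M} (h : Phi m₁ = Phi m₂) : m₁ = m₂ := by
  rw [← rho_Phi m₁, ← rho_Phi m₂, h]

/-- Validity of tableau data (column strictness and row lengths). -/
def Valid (T : Tab) : Prop := T.s ≤ T.p ∧ T.s + T.t ≤ T.p + T.q ∧ T.u ≤ T.s

lemma valid_step {T : Tab} (h : Valid T) (x : Fin 3) : Valid (step T x) := by
  obtain ⟨p,q,r,s,t,u⟩ := T
  have hx : x = 0 ∨ x = 1 ∨ x = 2 := by omega
  rcases hx with rfl | rfl | rfl <;> rcases q with _|q <;> rcases r with _|r <;>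
    rcases t with _|t <;> simp [Valid] at h ⊢ <;> omega

lemma valid_stepWord (w : FreeMonoid (Fin 3)) : ∀ T : Tab, Valid T → Valid (stepWord T w) := by
  induction w using FreeMonoid.inductionOn' with
  | one => intro T h; exact h
  | of_mul x w ih =>
    intro T h
    rw [stepWord_mul, stepWord_of]
    exact ih _ (valid_step h x)

lemma valid_e0 : Valid e0 := by simp [Valid, e0]

lemma valid_Phi (m : M) : Valid (Phi m) := by
  induction m using Con.induction_on with
  | H w => exact valid_stepWord w e0 valid_e0

lemma step_cba (T : Tab) : stepWord T (c * b * a) = colAdd T := by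
  obtain ⟨p,q,r,s,t,u⟩ := T
  simp [a, b, c, stepWord_mul, colAdd]

lemma rho_colAdd (T : Tab) : rho (colAdd T) = rho T * zm := by
  rw [← step_cba, rho_stepWord]
  rfl

lemma Phi_mul_z (m : M) : Phi (m * zm) = colAdd (Phi m) := by
  rw [show zm = mk (c*b*a) from rfl, Phi_mul_mk, step_cba]

lemma u_Phi_z_pow (m : M) (k : ℕ) : (Phi (m * zm^k)).u = (Phi m).u + k := by
  induction k with
  | zero => simp
  | succ k ih =>
    rw [pow_succ, ← mul_assoc, Phi_mul_z]
    show (Phi (m * zm^k)).u + 1 = _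
    omega

lemma colAdd_inj {S S' : Tab} (h : colAdd S = colAdd S') : S = S' := by
  obtain ⟨p,q,r,s,t,u⟩ := S; obtain ⟨p',q',r',s',t',u'⟩ := S'
  simp [colAdd] at h ⊢
  omega

lemma cancel_z {x y : M} (h : x * zm = y * zm) : x = y := by
  have h2 := congrArg Phi h
  rw [Phi_mul_z, Phi_mul_z] at h2
  exact Phi_injective (colAdd_inj h2)

lemma cancel_z_pow (k : ℕ) {x y : M} (h : x * zm^k = y * zm^k) : x = y := by
  induction k with
  | zero => simpa using h
  | succ k ih =>
    rw [pow_succ, ← mul_assoc, ← mul_assoc] at h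
    exact ih (cancel_z h)
lemma zm_eq' : zm = Cm * (Bm * Am) := by rw [zm_eq, mul_assoc]

/-- Right-associated trailing version of a 3-letter relation. -/
lemma tr3 {g1 g2 g3 h1 h2 h3 : M} (e : g1*g2*g3 = h1*h2*h3) (x : M) :
    g1*(g2*(g3*x)) = h1*(h2*(h3*x)) := by
  rw [← mul_assoc, ← mul_assoc, e, mul_assoc, mul_assoc]

lemma ra_aba : Am*(Bm*Am) = Bm*(Am*Am) := by rw [← mul_assoc, r_aba, mul_assoc]
lemma ra_bab : Bm*(Am*Bm) = Bm*(Bm*Am) := by rw [← mul_assoc, r_bab, mul_assoc]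
lemma ra_bac : Bm*(Am*Cm) = Bm*(Cm*Am) := by rw [← mul_assoc, r_bac, mul_assoc]

lemma cZA : zm * Am = Am * zm := by
  rw [zm_eq']
  simp only [mul_assoc]
  rw [tr3 r_acb, ra_aba]

lemma cZB : zm * Bm = Bm * zm := by
  rw [zm_eq']
  simp only [mul_assoc]
  rw [tr3 r_cbb.symm, ra_bab]

lemma cZC : zm * Cm = Cm * zm := by
  rw [zm_eq']
  simp only [mul_assoc]
  rw [ra_bac, tr3 r_cbc]

lemma z_comm (m : M) : zm * m = m * zm := by
  induction m using Con.induction_on with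
  | H w =>
    induction w using FreeMonoid.inductionOn' with
    | one =>
      show zm * ((1 : FreeMonoid (Fin 3)) : M) = _
      have h1 : ((1 : FreeMonoid (Fin 3)) : M) = 1 := rfl
      rw [h1, mul_one, one_mul]
    | of_mul x w ih =>
      have h1 : ((FreeMonoid.of x * w : FreeMonoid (Fin 3)) : M)
          = mk (FreeMonoid.of x) * (w : M) := by
        show mk (FreeMonoid.of x * w) = _
        rw [map_mul]; rfl
      have hg : zm * mk (FreeMonoid.of x) = mk (FreeMonoid.of x) * zm := by
        have hx : x = 0 ∨ x = 1 ∨ x = 2 := by omega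
        rcases hx with rfl | rfl | rfl
        · exact cZA
        · exact cZB
        · exact cZC
      rw [h1, ← mul_assoc, hg, mul_assoc, ih, ← mul_assoc]

lemma z_pow_comm (n : ℕ) (m : M) : m * zm^n = zm^n * m :=
  ((show Commute m zm from (z_comm m).symm).pow_right n).eq

/-- The congruence `x ~ y ↔ x z^i = y z^j` for some `i j`. -/
def zCon : Con M where
  r x y := ∃ i j : ℕ, x * zm^i = y * zm^j
  iseqv := by
    refine ⟨fun x => ⟨0, 0, rfl⟩, fun ⟨i, j, h⟩ => ⟨j, i, h.symm⟩, ?_⟩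
    rintro x y w ⟨i, j, h1⟩ ⟨k, l, h2⟩
    refine ⟨i + k, l + j, ?_⟩
    calc x * zm^(i+k) = x * zm^i * zm^k := by rw [pow_add, mul_assoc]
      _ = y * zm^j * zm^k := by rw [h1]
      _ = y * zm^k * zm^j := by
          rw [mul_assoc, mul_assoc, ← pow_add, ← pow_add, add_comm]
      _ = w * zm^l * zm^j := by rw [h2]
      _ = w * zm^(l+j) := by rw [mul_assoc, ← pow_add]
  mul' := by
    rintro x₁ x₂ y₁ y₂ ⟨i, j, h1⟩ ⟨k, l, h2⟩
    refine ⟨i + k, j + l, ?_⟩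
    calc x₁ * y₁ * zm^(i+k) = x₁ * y₁ * (zm^i * zm^k) := by rw [pow_add]
      _ = x₁ * (y₁ * zm^i) * zm^k := by rw [mul_assoc, mul_assoc, mul_assoc]
      _ = x₁ * (zm^i * y₁) * zm^k := by rw [z_pow_comm i y₁]
      _ = (x₁ * zm^i) * (y₁ * zm^k) := by rw [mul_assoc, mul_assoc, mul_assoc]
      _ = (x₂ * zm^j) * (y₂ * zm^l) := by rw [h1, h2]
      _ = x₂ * (zm^j * y₂) * zm^l := by rw [mul_assoc, mul_assoc, mul_assoc]
      _ = x₂ * (y₂ * zm^j) * zm^l := by rw [z_pow_comm j y₂]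
      _ = x₂ * y₂ * (zm^j * zm^l) := by rw [mul_assoc, mul_assoc, mul_assoc]
      _ = x₂ * y₂ * zm^(j+l) := by rw [pow_add]
lemma conM'_le_zCon : conM' ≤ zCon := by
  apply Con.conGen_le.2
  rintro x y ⟨rfl, rfl⟩
  exact ⟨0, 1, by simp [zm]⟩

lemma conM'_char {x y : M} (h : conM' x y) : ∃ i j : ℕ, x * zm^i = y * zm^j :=
  conM'_le_zCon h

lemma pi_z : conM'.mk' zm = 1 := by
  have h : conM' zm 1 := ConGen.Rel.of _ _ ⟨rfl, rfl⟩
  have h2 : (zm : M') = ((1 : M) : M') := (Con.eq conM').mpr h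
  simpa using h2

lemma rho_strip : ∀ (k : ℕ) (T : Tab), Valid T → T.u = k →
    rho T = rho ⟨T.p - k, T.q, T.r, T.s - k, T.t, 0⟩ * zm^k := by
  intro k
  induction k with
  | zero =>
    rintro ⟨p,q,r,s,t,u⟩ _ hu
    simp only at hu
    subst hu
    simp
  | succ k ih =>
    rintro ⟨p,q,r,s,t,u⟩ hv hu
    simp only at hu
    subst hu
    obtain ⟨h1, h2, h3⟩ := show s ≤ p ∧ s + t ≤ p + q ∧ k + 1 ≤ s from hv
    have hT : (⟨p,q,r,s,t,k+1⟩ : Tab) = colAdd ⟨p-1,q,r,s-1,t,k⟩ := by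
      simp [colAdd, Tab.mk.injEq]
      omega
    have hv' : Valid ⟨p-1,q,r,s-1,t,k⟩ := by
      show s - 1 ≤ p - 1 ∧ (s-1) + t ≤ (p-1) + q ∧ k ≤ s - 1
      omega
    have hih := ih ⟨p-1,q,r,s-1,t,k⟩ hv' rfl
    dsimp only at hih
    have e1 : p - 1 - k = p - (k+1) := by omega
    have e2 : s - 1 - k = s - (k+1) := by omega
    rw [e1, e2] at hih
    show rho ⟨p,q,r,s,t,k+1⟩ = rho ⟨p-(k+1), q, r, s-(k+1), t, 0⟩ * zm^(k+1)
    rw [hT, rho_colAdd, hih, mul_assoc, ← pow_succ]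

lemma mem_Mz_of_u {y : M} (h : (Phi y).u ≠ 0) : ∃ n : M, y = n * zm := by
  have hval := valid_Phi y
  have hy : y = rho ⟨(Phi y).p - (Phi y).u, (Phi y).q, (Phi y).r,
      (Phi y).s - (Phi y).u, (Phi y).t, 0⟩ * zm^(Phi y).u := by
    have h0 := rho_strip (Phi y).u (Phi y) hval rfl
    rw [rho_Phi y] at h0
    exact h0
  obtain ⟨k, hk⟩ : ∃ k, (Phi y).u = k + 1 := ⟨(Phi y).u - 1, by omega⟩
  refine ⟨rho ⟨(Phi y).p - (Phi y).u, (Phi y).q, (Phi y).r,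
      (Phi y).s - (Phi y).u, (Phi y).t, 0⟩ * zm^k, ?_⟩
  rw [mul_assoc, ← pow_succ, ← hk]
  exact hy

lemma u_zero_of_not {y : M} (h : ¬ ∃ n : M, y = n * zm) : (Phi y).u = 0 := by
  by_contra hu
  exact h (mem_Mz_of_u hu)
/-- The quotient projection `π : M →* M'` restricts to a bijection from
`M \ M·z` (elements not of the form `m * z`, where `z = cba`) onto `M'`:
every element of `M'` has a unique preimage outside `M·z`. -/
theorem quotient_bijection_off_Mz :
    ∀ m' : M', ∃! v : M,
      (¬ ∃ m : M, v = m * mk (c * b * a)) ∧ conM'.mk' v = m' := by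
  intro m'
  obtain ⟨m, rfl⟩ := Con.mk'_surjective m'
  have hval := valid_Phi m
  set k := (Phi m).u with hk
  set v : M := rho ⟨(Phi m).p - k, (Phi m).q, (Phi m).r, (Phi m).s - k, (Phi m).t, 0⟩ with hv
  have hm : m = v * zm^k := by
    have h0 := rho_strip k (Phi m) hval hk.symm
    rw [rho_Phi m] at h0
    exact h0
  have hvu : (Phi v).u = 0 := by
    have h1 := u_Phi_z_pow v k
    rw [← hm] at h1
    omega
  have hnot : ¬ ∃ n : M, v = n * mk (c * b * a) := by
    rintro ⟨n, hn⟩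
    have h2 : (Phi v).u = (Phi n).u + 1 := by
      rw [hn, show mk (c*b*a) = zm from rfl, Phi_mul_z]
      rfl
    omega
  have hveq : conM'.mk' v = conM'.mk' m := by
    rw [hm, map_mul, map_pow, pi_z, one_pow, mul_one]
  refine ⟨v, ⟨hnot, hveq⟩, ?_⟩
  rintro y ⟨hy1, hy2⟩
  have hcon : conM' y v := by
    have h3 : conM'.mk' y = conM'.mk' v := by rw [hy2, hveq]
    exact (Con.eq conM').mp h3
  obtain ⟨i, j, hij⟩ := conM'_char hcon
  have hyu : (Phi y).u = 0 := u_zero_of_not hy1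
  have hij_u := congrArg (fun w => (Phi w).u) hij
  simp only [u_Phi_z_pow] at hij_u
  have hije : i = j := by omega
  subst hije
  exact cancel_z_pow i hij

end Plactic
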